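/- For every context-free grammar G = (N, T, P, S) whose language does not contain the empty word, there exists a context-free grammar G' = (N', T, P', S) in Dyck normal form such that L(G') = L(G). -/

import Mathlib

/-- A context-free grammar is in Chomsky normal form: every rule is of the form `X → AB`
with `A`, `B` nonterminals, or `X → a` with `a` a terminal. -/
def IsChomskyNF {T : Type} (g : ContextFreeGrammar T) : Prop :=
  ∀ r ∈ g.rules,
    (∃ A B : g.NT, r.output = [Symbol.nonterminal A, Symbol.nonterminal B]) ∨
    (∃ a : T, r.output = [Symbol.terminal a])

/-- A context-free grammar is in Dyck normal form:
(1) it is in Chomsky normal form;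
(2) if `A → a` is a rule with `A ≠ S`, then no other rule rewrites `A`;
(3) if `X → AB` and `X' → B'A` are both rules, they are the same rule
    (i.e. no *other* rule has `A` on the opposite side);
(4) if `X → AB` and `X' → A'B` are rules then `A = A'`, and if `X → AB` and `X' → AB'`
    are rules then `B = B'`. -/
def IsDyckNF {T : Type} (g : ContextFreeGrammar T) : Prop :=
  IsChomskyNF g ∧
  (∀ r ∈ g.rules, ∀ a : T, r.output = [Symbol.terminal a] → r.input ≠ g.initial →
    ∀ r' ∈ g.rules, r'.input = r.input → r' = r) ∧
  (∀ r ∈ g.rules, ∀ r' ∈ g.rules, ∀ A B B' : g.NT,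
    r.output = [Symbol.nonterminal A, Symbol.nonterminal B] →
    r'.output = [Symbol.nonterminal B', Symbol.nonterminal A] → r = r') ∧
  (∀ r ∈ g.rules, ∀ r' ∈ g.rules, ∀ A A' B B' : g.NT,
    r.output = [Symbol.nonterminal A, Symbol.nonterminal B] →
    r'.output = [Symbol.nonterminal A', Symbol.nonterminal B'] →
    (B = B' → A = A') ∧ (A = A' → B = B'))

set_option maxHeartbeats 1000000

open ContextFreeGrammar

namespace DyckNF

variable {T : Type}

/-- n-step derivations. -/
inductive DerivesIn (g : ContextFreeGrammar T) :
    List (Symbol T g.NT) → List (Symbol T g.NT) → ℕ → Prop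
  | refl (u : List (Symbol T g.NT)) : DerivesIn g u u 0
  | head {u v w : List (Symbol T g.NT)} {n : ℕ} :
      g.Produces u v → DerivesIn g v w n → DerivesIn g u w (n + 1)

lemma derives_iff_derivesIn (g : ContextFreeGrammar T) (u v : List (Symbol T g.NT)) :
    g.Derives u v ↔ ∃ n, DerivesIn g u v n := by
  constructor
  · intro h
    induction h using Relation.ReflTransGen.head_induction_on with
    | refl => exact ⟨0, .refl v⟩
    | head hp _ ih => obtain ⟨n, hn⟩ := ih; exact ⟨n + 1, .head hp hn⟩
  · rintro ⟨n, hn⟩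
    induction hn with
    | refl => exact Derives.refl _
    | head hp _ ih => exact hp.trans_derives ih

lemma DerivesIn.derives {g : ContextFreeGrammar T} {u v : List (Symbol T g.NT)} {n : ℕ}
    (h : DerivesIn g u v n) : g.Derives u v :=
  (derives_iff_derivesIn g u v).2 ⟨n, h⟩

lemma DerivesIn.cases_head {g : ContextFreeGrammar T} {u v : List (Symbol T g.NT)} {n : ℕ}
    (h : DerivesIn g u v n) :
    (n = 0 ∧ u = v) ∨ ∃ m w, n = m + 1 ∧ g.Produces u w ∧ DerivesIn g w v m := by
  cases h with
  | refl => exact Or.inl ⟨rfl, rfl⟩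
  | head hp hd => exact Or.inr ⟨_, _, rfl, hp, hd⟩

lemma rewrites_singleton {N : Type*} {r : ContextFreeRule T N} {X : N}
    {v : List (Symbol T N)} (h : r.Rewrites [Symbol.nonterminal X] v) :
    r.input = X ∧ v = r.output := by
  cases h with
  | head => exact ⟨rfl, by simp⟩
  | cons x h' => cases h'

lemma produces_singleton {g : ContextFreeGrammar T} {X : g.NT} {v : List (Symbol T g.NT)} :
    g.Produces [Symbol.nonterminal X] v ↔ ∃ r ∈ g.rules, r.input = X ∧ v = r.output := by
  constructor
  · rintro ⟨r, hr, hrw⟩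
    exact ⟨r, hr, rewrites_singleton hrw⟩
  · rintro ⟨r, hr, hin, hout⟩
    subst hin; subst hout
    exact ⟨r, hr, ContextFreeRule.Rewrites.input_output⟩

lemma rewrites_append_split {N : Type*} {r : ContextFreeRule T N} :
    ∀ {u₁ u₂ v : List (Symbol T N)}, r.Rewrites (u₁ ++ u₂) v →
    (∃ v₁, r.Rewrites u₁ v₁ ∧ v = v₁ ++ u₂) ∨ (∃ v₂, r.Rewrites u₂ v₂ ∧ v = u₁ ++ v₂) := by
  intro u₁
  induction u₁ with
  | nil =>
    intro u₂ v h
    right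
    exact ⟨v, by simpa using h, by simp⟩
  | cons x u₁' ih =>
    intro u₂ v h
    rw [List.cons_append] at h
    cases h with
    | head =>
      left
      exact ⟨r.output ++ u₁', ContextFreeRule.Rewrites.head u₁', by simp⟩
    | cons y h' =>
      rcases ih h' with ⟨v₁, hv₁, rfl⟩ | ⟨v₂, hv₂, rfl⟩
      · exact Or.inl ⟨x :: v₁, hv₁.cons x, by simp⟩
      · exact Or.inr ⟨v₂, hv₂, by simp⟩

lemma DerivesIn.append_split {g : ContextFreeGrammar T} {u₁ u₂ w : List (Symbol T g.NT)} {n : ℕ}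
    (h : DerivesIn g (u₁ ++ u₂) w n) :
    ∃ w₁ w₂ n₁ n₂, w = w₁ ++ w₂ ∧ n₁ + n₂ = n ∧ DerivesIn g u₁ w₁ n₁ ∧ DerivesIn g u₂ w₂ n₂ := by
  induction n generalizing u₁ u₂ with
  | zero =>
    cases h with
    | refl => exact ⟨u₁, u₂, 0, 0, rfl, rfl, .refl _, .refl _⟩
  | succ n ih =>
    cases h with
    | head hp hd =>
      obtain ⟨r, hr, hrw⟩ := hp
      rcases rewrites_append_split hrw with ⟨v₁, hv₁, rfl⟩ | ⟨v₂, hv₂, rfl⟩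
      · obtain ⟨w₁, w₂, n₁, n₂, rfl, hn, hd1, hd2⟩ := ih hd
        exact ⟨w₁, w₂, n₁ + 1, n₂, rfl, by omega, .head ⟨r, hr, hv₁⟩ hd1, hd2⟩
      · obtain ⟨w₁, w₂, n₁, n₂, rfl, hn, hd1, hd2⟩ := ih hd
        exact ⟨w₁, w₂, n₁, n₂ + 1, rfl, by omega, hd1, .head ⟨r, hr, hv₂⟩ hd2⟩

lemma not_produces_of_terminals {g : ContextFreeGrammar T} {u v : List (Symbol T g.NT)}
    (hu : ∀ s ∈ u, ∃ a, s = Symbol.terminal a) (h : g.Produces u v) : False := by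
  obtain ⟨r, _, hrw⟩ := h
  obtain ⟨p, q, h1, _⟩ := hrw.exists_parts
  have : Symbol.nonterminal r.input ∈ u := by rw [h1]; simp
  obtain ⟨a, ha⟩ := hu _ this
  simp at ha

lemma DerivesIn.eq_of_terminals {g : ContextFreeGrammar T} {u v : List (Symbol T g.NT)} {n : ℕ}
    (hu : ∀ s ∈ u, ∃ a, s = Symbol.terminal a) (h : DerivesIn g u v n) : v = u := by
  cases h with
  | refl => rfl
  | head hp _ => exact absurd hp (by intro hc; exact not_produces_of_terminals hu hc)

lemma Derives.eq_of_terminals {g : ContextFreeGrammar T} {u v : List (Symbol T g.NT)}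
    (hu : ∀ s ∈ u, ∃ a, s = Symbol.terminal a) (h : g.Derives u v) : v = u := by
  obtain ⟨n, hn⟩ := (derives_iff_derivesIn g u v).1 h
  induction hn with
  | refl => rfl
  | head hp _ _ => exact absurd hp (by intro hc; exact not_produces_of_terminals hu hc)

/-- Transport of derivations along a symbol-to-string map. -/
lemma derives_flatMap {g₁ g₂ : ContextFreeGrammar T}
    (f : Symbol T g₁.NT → List (Symbol T g₂.NT))
    (hf : ∀ r ∈ g₁.rules, g₂.Derives (f (Symbol.nonterminal r.input)) (r.output.flatMap f))
    {u v : List (Symbol T g₁.NT)} (h : g₁.Derives u v) :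
    g₂.Derives (u.flatMap f) (v.flatMap f) := by
  induction h with
  | refl => exact Derives.refl _
  | tail _ hp ih =>
    refine ih.trans ?_
    obtain ⟨r, hr, hrw⟩ := hp
    obtain ⟨p, q, h1, h2⟩ := hrw.exists_parts
    rw [h1, h2]
    simp only [List.flatMap_append]
    refine Derives.append_right (Derives.append_left ?_ _) _
    simpa using hf r hr

lemma flatMap_single {α β : Type*} (f : α → β) (l : List α) :
    l.flatMap (fun x => [f x]) = l.map f := by
  induction l with
  | nil => rfl
  | cons a l ih => simp [ih]

lemma derives_map_pointwise {g : ContextFreeGrammar T} (u v : T → Symbol T g.NT)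
    (w : List T) (h : ∀ a ∈ w, g.Derives [u a] [v a]) :
    g.Derives (w.map u) (w.map v) := by
  induction w with
  | nil => exact Derives.refl _
  | cons a w ih =>
    have h1 : g.Derives (u a :: w.map u) (v a :: w.map u) := by
      simpa using (h a (by simp)).append_right (w.map u)
    have h2 : g.Derives (v a :: w.map u) (v a :: w.map v) := by
      simpa using (ih (fun b hb => h b (by simp [hb]))).append_left [v a]
    exact h1.trans h2

/-! ### Step 1: TERM — isolate terminals -/

section TERM

variable (g : ContextFreeGrammar T)

def liftSym {N : Type*} : Symbol T N → Symbol T (N ⊕ T)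
  | .terminal a => .nonterminal (Sum.inr a)
  | .nonterminal X => .nonterminal (Sum.inl X)

def unliftSym {N : Type*} : Symbol T (N ⊕ T) → List (Symbol T N)
  | .terminal a => [.terminal a]
  | .nonterminal (Sum.inl X) => [.nonterminal X]
  | .nonterminal (Sum.inr a) => [.terminal a]

def termOf {N : Type*} : Symbol T N → Option T
  | .terminal a => some a
  | _ => none

@[reducible] noncomputable def termG : ContextFreeGrammar T where
  NT := g.NT ⊕ T
  initial := Sum.inl g.initial
  rules :=
    letI := Classical.decEq (ContextFreeRule T (g.NT ⊕ T))
    (g.rules.toList.map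
        (fun (r : ContextFreeRule T g.NT) =>
          (⟨Sum.inl r.input, r.output.map liftSym⟩ : ContextFreeRule T (g.NT ⊕ T))) ++
      (g.rules.toList.flatMap
          (fun (r : ContextFreeRule T g.NT) => r.output.filterMap termOf)).map
        (fun (a : T) => (⟨Sum.inr a, [Symbol.terminal a]⟩ : ContextFreeRule T (g.NT ⊕ T)))).toFinset

lemma mem_termG {r : ContextFreeRule T (termG g).NT} :
    r ∈ (termG g).rules ↔
      (∃ r' ∈ g.rules, r = ⟨Sum.inl r'.input, r'.output.map liftSym⟩) ∨
      (∃ a : T, (∃ r' ∈ g.rules, Symbol.terminal a ∈ r'.output) ∧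
        r = ⟨Sum.inr a, [Symbol.terminal a]⟩) := by
  classical
  rw [show (termG g).rules =
    (letI := Classical.decEq (ContextFreeRule T (g.NT ⊕ T))
    ((g.rules.toList.map
        (fun (r : ContextFreeRule T g.NT) =>
          (⟨Sum.inl r.input, r.output.map liftSym⟩ : ContextFreeRule T (g.NT ⊕ T))) ++
      (g.rules.toList.flatMap
          (fun (r : ContextFreeRule T g.NT) => r.output.filterMap termOf)).map
        (fun (a : T) => (⟨Sum.inr a, [Symbol.terminal a]⟩ : ContextFreeRule T (g.NT ⊕ T)))).toFinset))
    from rfl]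
  rw [@List.mem_toFinset _ (Classical.decEq _), List.mem_append, List.mem_map, List.mem_map]
  constructor
  · rintro (⟨r', hr', rfl⟩ | ⟨a, ha, rfl⟩)
    · exact Or.inl ⟨r', by simpa using hr', rfl⟩
    · refine Or.inr ⟨a, ?_, rfl⟩
      obtain ⟨r', hr', hmem⟩ := List.mem_flatMap.1 ha
      obtain ⟨s, hs, hsa⟩ := List.mem_filterMap.1 hmem
      cases s with
      | terminal b => simp [termOf] at hsa; subst hsa
                      exact ⟨r', by simpa using hr', hs⟩
      | nonterminal X => simp [termOf] at hsa
  · rintro (⟨r', hr', rfl⟩ | ⟨a, ⟨r', hr', hmem⟩, rfl⟩)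
    · exact Or.inl ⟨r', by simpa using hr', rfl⟩
    · refine Or.inr ⟨a, ?_, rfl⟩
      exact List.mem_flatMap.2 ⟨r', by simpa using hr',
        List.mem_filterMap.2 ⟨Symbol.terminal a, hmem, rfl⟩⟩

lemma termG_shape : ∀ r ∈ (termG g).rules,
    (∀ s ∈ r.output, ∃ X, s = Symbol.nonterminal X) ∨ ∃ a : T, r.output = [Symbol.terminal a] := by
  intro r hr
  rcases (mem_termG g).1 hr with ⟨r', _, rfl⟩ | ⟨a, _, rfl⟩
  · left
    intro s hs
    obtain ⟨s', _, rfl⟩ := List.mem_map.1 hs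
    cases s' <;> simp [liftSym]
  · exact Or.inr ⟨a, rfl⟩

lemma unlift_lift {N : Type*} (l : List (Symbol T N)) :
    (l.map liftSym).flatMap unliftSym = l := by
  induction l with
  | nil => rfl
  | cons s l ih => cases s <;> simp [liftSym, unliftSym, ih]

lemma unlift_terms (w : List T) :
    (w.map (Symbol.terminal : T → Symbol T (termG g).NT)).flatMap unliftSym
      = w.map Symbol.terminal := by
  induction w with
  | nil => rfl
  | cons a w ih => simp [unliftSym, ih]

lemma termG_le {u v : List (Symbol T (termG g).NT)} (h : (termG g).Derives u v) :
    g.Derives (u.flatMap unliftSym) (v.flatMap unliftSym) := by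
  refine derives_flatMap unliftSym ?_ h
  intro r hr
  rcases (mem_termG g).1 hr with ⟨r', hr', rfl⟩ | ⟨a, _, rfl⟩
  · have he : (List.map liftSym r'.output).flatMap unliftSym = r'.output := unlift_lift _
    show g.Derives (unliftSym (Symbol.nonterminal (Sum.inl r'.input))) _
    rw [he, show unliftSym (Symbol.nonterminal (Sum.inl r'.input))
        = [Symbol.nonterminal r'.input] from rfl]
    exact Produces.single ⟨r', hr', ContextFreeRule.Rewrites.input_output⟩
  · show g.Derives (unliftSym (Symbol.nonterminal (Sum.inr a))) _
    rw [show unliftSym (Symbol.nonterminal (Sum.inr a)) = [Symbol.terminal a] from rfl]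
    show g.Derives [Symbol.terminal a] ([Symbol.terminal a].flatMap unliftSym)
    exact Derives.refl _

lemma mem_rules_of_terminal {u v : List (Symbol T g.NT)} (h : g.Derives u v) :
    ∀ a : T, Symbol.terminal a ∈ v → Symbol.terminal a ∈ u ∨
      ∃ r ∈ g.rules, Symbol.terminal a ∈ r.output := by
  induction h with
  | refl => exact fun a ha => Or.inl ha
  | tail _ hp ih =>
    intro a ha
    obtain ⟨r, hr, hrw⟩ := hp
    obtain ⟨p, q, h1, h2⟩ := hrw.exists_parts
    rw [h2] at ha
    simp only [List.mem_append] at ha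
    rcases ha with (ha | ha) | ha
    · exact ih a (by rw [h1]; simp [ha])
    · exact Or.inr ⟨r, hr, ha⟩
    · exact ih a (by rw [h1]; simp [ha])

lemma termG_ge {u v : List (Symbol T g.NT)} (h : g.Derives u v) :
    (termG g).Derives (u.map liftSym) (v.map liftSym) := by
  have := derives_flatMap (g₁ := g) (g₂ := termG g) (fun s => [liftSym s]) ?_ h
  · simpa [flatMap_single] using this
  · intro r hr
    show (termG g).Derives [Symbol.nonterminal (Sum.inl r.input)] _
    rw [flatMap_single]
    refine Produces.single ⟨⟨Sum.inl r.input, r.output.map liftSym⟩, ?_, ?_⟩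
    · exact (mem_termG g).2 (Or.inl ⟨r, hr, rfl⟩)
    · exact ContextFreeRule.Rewrites.input_output
        (r := (⟨Sum.inl r.input, r.output.map liftSym⟩ : ContextFreeRule T (termG g).NT))

lemma termG_lang : (termG g).language = g.language := by
  ext w
  rw [mem_language_iff, mem_language_iff]
  constructor
  · intro h
    have := termG_le g h
    rw [unlift_terms] at this
    simpa [unliftSym] using this
  · intro h
    have h1 := termG_ge g h
    simp only [List.map_map] at h1
    have h2 : (termG g).Derives (w.map (fun a => liftSym (Symbol.terminal a)))
        (w.map Symbol.terminal) := by
      refine derives_map_pointwise _ _ w ?_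
      intro a ha
      have : Symbol.terminal a ∈ w.map (Symbol.terminal : T → Symbol T g.NT) :=
        List.mem_map.2 ⟨a, ha, rfl⟩
      rcases mem_rules_of_terminal g h a this with hc | ⟨r, hr, hro⟩
      · exact absurd hc (by simp)
      · refine Produces.single ⟨⟨Sum.inr a, [Symbol.terminal a]⟩, ?_, ?_⟩
        · exact (mem_termG g).2 (Or.inr ⟨a, ⟨r, hr, hro⟩, rfl⟩)
        · exact ContextFreeRule.Rewrites.input_output
            (r := (⟨Sum.inr a, [Symbol.terminal a]⟩ : ContextFreeRule T (termG g).NT))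
    exact h1.trans h2

end TERM

/-! ### Step 2: BIN — break long rules into binary chains -/

section BIN

variable (g : ContextFreeGrammar T)

def upSym {N : Type*} : Symbol T N → Symbol T (N ⊕ (ContextFreeRule T N × ℕ))
  | .terminal a => .terminal a
  | .nonterminal X => .nonterminal (Sum.inl X)

def downSym {N : Type*} : Symbol T (N ⊕ (ContextFreeRule T N × ℕ)) → List (Symbol T N)
  | .terminal a => [.terminal a]
  | .nonterminal (Sum.inl X) => [.nonterminal X]
  | .nonterminal (Sum.inr (r, i)) => r.output.drop (i + 1)

def splitRules {N : Type*} (r : ContextFreeRule T N) :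
    (N ⊕ (ContextFreeRule T N × ℕ)) → List (Symbol T N) → ℕ →
      List (ContextFreeRule T (N ⊕ (ContextFreeRule T N × ℕ)))
  | v, s₁ :: s₂ :: s₃ :: rest, i =>
      ⟨v, [upSym s₁, Symbol.nonterminal (Sum.inr (r, i))]⟩ ::
        splitRules r (Sum.inr (r, i)) (s₂ :: s₃ :: rest) (i + 1)
  | v, l, _ => [⟨v, l.map upSym⟩]

@[reducible] noncomputable def binG : ContextFreeGrammar T where
  NT := g.NT ⊕ (ContextFreeRule T g.NT × ℕ)
  initial := Sum.inl g.initial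
  rules :=
    letI := Classical.decEq (ContextFreeRule T (g.NT ⊕ (ContextFreeRule T g.NT × ℕ)))
    (g.rules.toList.flatMap
      (fun r => splitRules r (Sum.inl r.input) r.output 0)).toFinset

lemma mem_binG {ρ : ContextFreeRule T (binG g).NT} :
    ρ ∈ (binG g).rules ↔ ∃ r ∈ g.rules, ρ ∈ splitRules r (Sum.inl r.input) r.output 0 := by
  classical
  rw [show (binG g).rules =
    (letI := Classical.decEq (ContextFreeRule T (g.NT ⊕ (ContextFreeRule T g.NT × ℕ)))
    (g.rules.toList.flatMap
      (fun r => splitRules r (Sum.inl r.input) r.output 0)).toFinset) from rfl]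
  rw [@List.mem_toFinset _ (Classical.decEq _), List.mem_flatMap]
  simp [Finset.mem_toList]

lemma down_up {N : Type*} (l : List (Symbol T N)) :
    (l.map upSym).flatMap downSym = l := by
  induction l with
  | nil => rfl
  | cons s l ih => cases s <;> simp [upSym, downSym, ih]

lemma binG_fwd_aux (r : ContextFreeRule T g.NT) (hr : r ∈ g.rules) :
    ∀ (v : (binG g).NT) l i, l = r.output.drop i →
      g.Derives (downSym (Symbol.nonterminal v)) l →
      ∀ ρ ∈ splitRules r v l i,
        g.Derives (downSym (Symbol.nonterminal ρ.input)) (ρ.output.flatMap downSym) := by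
  intro v l i
  induction v, l, i using splitRules.induct (T := T) (r := r) with
  | case1 v s₁ s₂ s₃ rest i ih =>
    intro hl hder ρ hρ
    rw [splitRules] at hρ
    have hdrop : s₂ :: s₃ :: rest = r.output.drop (i + 1) := by
      rw [← List.tail_drop, ← hl]
      rfl
    rcases List.mem_cons.1 hρ with rfl | hρ
    · show g.Derives _ (([upSym s₁, Symbol.nonterminal (Sum.inr (r, i))]).flatMap downSym)
      have : ([upSym s₁, Symbol.nonterminal (Sum.inr (r, i))]).flatMap downSym
          = s₁ :: s₂ :: s₃ :: rest := by
        cases s₁ <;> simp [upSym, downSym, ← hdrop]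
      rw [this]
      exact hder
    · refine ih hdrop ?_ ρ hρ
      show g.Derives (r.output.drop (i + 1)) _
      rw [← hdrop]
  | case2 v l i hshort =>
    intro hl hder ρ hρ
    rw [splitRules] at hρ
    · simp only [List.mem_singleton] at hρ
      subst hρ
      show g.Derives _ ((l.map upSym).flatMap downSym)
      rw [down_up]
      exact hder
    · exact hshort

lemma binG_le {u v : List (Symbol T (binG g).NT)} (h : (binG g).Derives u v) :
    g.Derives (u.flatMap downSym) (v.flatMap downSym) := by
  refine derives_flatMap downSym ?_ h
  intro ρ hρ
  obtain ⟨r, hr, hmem⟩ := (mem_binG g).1 hρ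
  refine binG_fwd_aux g r hr (Sum.inl r.input) r.output 0 (by simp) ?_ ρ hmem
  show g.Derives [Symbol.nonterminal r.input] r.output
  exact Produces.single ⟨r, hr, ContextFreeRule.Rewrites.input_output⟩

lemma binG_bwd_aux (r : ContextFreeRule T g.NT) :
    ∀ (v : (binG g).NT) l i,
      (∀ ρ ∈ splitRules r v l i, ρ ∈ (binG g).rules) →
      (binG g).Derives [Symbol.nonterminal v] (l.map upSym) := by
  intro v l i
  induction v, l, i using splitRules.induct (T := T) (r := r) with
  | case1 v s₁ s₂ s₃ rest i ih =>
    intro hsub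
    have h1 : (binG g).Produces [Symbol.nonterminal v]
        [upSym s₁, Symbol.nonterminal (Sum.inr (r, i))] :=
      ⟨⟨v, [upSym s₁, Symbol.nonterminal (Sum.inr (r, i))]⟩,
        hsub _ (by rw [splitRules]; exact List.mem_cons_self),
        ContextFreeRule.Rewrites.input_output⟩
    have h2 := ih (fun ρ hρ => hsub ρ (by rw [splitRules]; exact List.mem_cons_of_mem _ hρ))
    have h3 : (binG g).Derives [upSym s₁, Symbol.nonterminal (Sum.inr (r, i))]
        ((s₁ :: s₂ :: s₃ :: rest).map upSym) := by
      have := h2.append_left [upSym s₁]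
      simpa using this
    exact h1.trans_derives h3
  | case2 v l i hshort =>
    intro hsub
    refine Produces.single ⟨⟨v, l.map upSym⟩, ?_, ContextFreeRule.Rewrites.input_output⟩
    refine hsub _ ?_
    rw [splitRules]
    · exact List.mem_singleton.2 rfl
    · exact hshort

lemma binG_ge {u v : List (Symbol T g.NT)} (h : g.Derives u v) :
    (binG g).Derives (u.map upSym) (v.map upSym) := by
  have := derives_flatMap (g₁ := g) (g₂ := binG g) (fun s => [upSym s]) ?_ h
  · simpa [flatMap_single] using this
  · intro r hr
    show (binG g).Derives [upSym (Symbol.nonterminal r.input)] _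
    rw [flatMap_single]
    refine binG_bwd_aux g r (Sum.inl r.input) r.output 0 ?_
    intro ρ hρ
    exact (mem_binG g).2 ⟨r, hr, hρ⟩

lemma down_terms (w : List T) :
    (w.map (Symbol.terminal : T → Symbol T (binG g).NT)).flatMap downSym
      = w.map Symbol.terminal := by
  induction w with
  | nil => rfl
  | cons a w ih => simp [downSym, ih]

lemma up_terms (w : List T) :
    (w.map (Symbol.terminal : T → Symbol T g.NT)).map upSym
      = w.map (Symbol.terminal : T → Symbol T (binG g).NT) := by
  induction w with
  | nil => rfl
  | cons a w ih => simp [upSym, ih]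

lemma binG_lang : (binG g).language = g.language := by
  ext w
  rw [mem_language_iff, mem_language_iff]
  constructor
  · intro h
    have := binG_le g h
    rw [down_terms] at this
    simpa [downSym] using this
  · intro h
    have := binG_ge g h
    rw [up_terms] at this
    simpa [upSym] using this

/-- Shape of rules after TERM and BIN. -/
def GoodShape {N : Type*} (ρ : ContextFreeRule T N) : Prop :=
  ρ.output = [] ∨ (∃ B, ρ.output = [Symbol.nonterminal B]) ∨
  (∃ a, ρ.output = [Symbol.terminal a]) ∨
  (∃ B C, ρ.output = [Symbol.nonterminal B, Symbol.nonterminal C])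

lemma binG_shape
    (hg : ∀ r ∈ g.rules, (∀ s ∈ r.output, ∃ X, s = Symbol.nonterminal X) ∨
      ∃ a : T, r.output = [Symbol.terminal a]) :
    ∀ ρ ∈ (binG g).rules, GoodShape ρ := by
  intro ρ hρ
  obtain ⟨r, hr, hmem⟩ := (mem_binG g).1 hρ
  have key : ∀ (v : (binG g).NT) l i,
      ((∀ s ∈ l, ∃ X, s = Symbol.nonterminal X) ∨ ∃ a : T, l = [Symbol.terminal a]) →
      ∀ ρ ∈ splitRules r v l i, GoodShape ρ := by
    intro v l i
    induction v, l, i using splitRules.induct (T := T) (r := r) with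
    | case1 v s₁ s₂ s₃ rest i ih =>
      intro hl ρ hρ
      rcases hl with hl | ⟨a, hl⟩
      · rw [splitRules] at hρ
        rcases List.mem_cons.1 hρ with rfl | hρ
        · obtain ⟨X, hX⟩ := hl s₁ (by simp)
          subst hX
          exact Or.inr (Or.inr (Or.inr ⟨Sum.inl X, Sum.inr (r, i), rfl⟩))
        · exact ih (Or.inl (fun s hs => hl s (by simp [hs]))) ρ hρ
      · simp at hl
    | case2 v l i hshort =>
      intro hl ρ hρ
      rw [splitRules] at hρ
      · simp only [List.mem_singleton] at hρ
        subst hρ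
        rcases hl with hl | ⟨a, rfl⟩
        · match l, hl with
          | [], _ => exact Or.inl rfl
          | [s], hl =>
            obtain ⟨X, rfl⟩ := hl s (by simp)
            exact Or.inr (Or.inl ⟨Sum.inl X, by simp [upSym]⟩)
          | [s, t], hl =>
            obtain ⟨X, rfl⟩ := hl s (by simp)
            obtain ⟨Y, rfl⟩ := hl t (by simp)
            exact Or.inr (Or.inr (Or.inr ⟨Sum.inl X, Sum.inl Y, by simp [upSym]⟩))
          | s :: t :: u :: rest, hl => exact (hshort s t u rest rfl).elim
        · exact Or.inr (Or.inr (Or.inl ⟨a, by simp [upSym]⟩))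
      · exact hshort
  exact key (Sum.inl r.input) r.output 0 (hg r hr) ρ hmem

end BIN

/-! ### Step 3: DU — eliminate ε-rules and unit rules -/

section DU

variable (g : ContextFreeGrammar T)

def Nullable (X : g.NT) : Prop := g.Derives [Symbol.nonterminal X] []

def UnitStep (X Y : g.NT) : Prop :=
  ∃ ρ ∈ g.rules, ρ.input = X ∧
    (ρ.output = [Symbol.nonterminal Y] ∨
      ∃ Z, (ρ.output = [Symbol.nonterminal Y, Symbol.nonterminal Z] ∨
            ρ.output = [Symbol.nonterminal Z, Symbol.nonterminal Y]) ∧ Nullable g Z)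

def UD : g.NT → g.NT → Prop := Relation.ReflTransGen (UnitStep g)

def getNT {N : Type*} : Symbol T N → Option N
  | .nonterminal X => some X
  | _ => none

noncomputable def allNTs : List g.NT :=
  g.initial :: g.rules.toList.flatMap (fun ρ => ρ.input :: ρ.output.filterMap getNT)

def DUGood {N : Type*} (ρ : ContextFreeRule T N) : Prop :=
  (∃ a, ρ.output = [Symbol.terminal a]) ∨
  (∃ B C, ρ.output = [Symbol.nonterminal B, Symbol.nonterminal C])

open Classical in
@[reducible] noncomputable def duG : ContextFreeGrammar T where
  NT := g.NT
  initial := g.initial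
  rules :=
    letI := Classical.decEq (ContextFreeRule T g.NT)
    ((allNTs g).flatMap (fun A => g.rules.toList.filterMap
      (fun ρ => if UD g A ρ.input ∧ DUGood ρ
        then some ⟨A, ρ.output⟩ else none))).toFinset

lemma mem_duG {ρ' : ContextFreeRule T g.NT} :
    ρ' ∈ (duG g).rules ↔ ∃ A ∈ allNTs g, ∃ ρ ∈ g.rules,
      UD g A ρ.input ∧ DUGood ρ ∧ ρ' = ⟨A, ρ.output⟩ := by
  classical
  show ρ' ∈ (letI := Classical.decEq (ContextFreeRule T g.NT);
    (_ : List (ContextFreeRule T g.NT)).toFinset) ↔ _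
  rw [@List.mem_toFinset _ (Classical.decEq _), List.mem_flatMap]
  constructor
  · rintro ⟨A, hA, hmem⟩
    obtain ⟨ρ, hρ, hsome⟩ := List.mem_filterMap.1 hmem
    split_ifs at hsome with hc
    exact ⟨A, hA, ρ, by simpa using hρ, hc.1, hc.2, (Option.some.inj hsome).symm⟩
  · rintro ⟨A, hA, ρ, hρ, h1, h2, rfl⟩
    exact ⟨A, hA, List.mem_filterMap.2 ⟨ρ, by simpa using hρ, by rw [if_pos ⟨h1, h2⟩]⟩⟩

lemma initial_mem_allNTs : g.initial ∈ allNTs g := by simp [allNTs]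

lemma input_mem_allNTs {ρ : ContextFreeRule T g.NT} (hρ : ρ ∈ g.rules) :
    ρ.input ∈ allNTs g := by
  simp only [allNTs, List.mem_cons, List.mem_flatMap]
  exact Or.inr ⟨ρ, by simpa using hρ, by simp⟩

lemma output_mem_allNTs {ρ : ContextFreeRule T g.NT} (hρ : ρ ∈ g.rules) {B : g.NT}
    (hB : Symbol.nonterminal B ∈ ρ.output) : B ∈ allNTs g := by
  simp only [allNTs, List.mem_cons, List.mem_flatMap]
  refine Or.inr ⟨ρ, by simpa using hρ, Or.inr ?_⟩
  exact List.mem_filterMap.2 ⟨Symbol.nonterminal B, hB, rfl⟩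

lemma UnitStep.derives {X Y : g.NT} (h : UnitStep g X Y) :
    g.Derives [Symbol.nonterminal X] [Symbol.nonterminal Y] := by
  obtain ⟨ρ, hρ, hin, hout⟩ := h
  rcases hout with hout | ⟨Z, hZ, hnull⟩
  · exact Produces.single ⟨ρ, hρ, hin ▸ hout ▸ ContextFreeRule.Rewrites.input_output⟩
  · rcases hZ with hZ | hZ
    · refine (Produces.single ⟨ρ, hρ, hin ▸ hZ ▸ ContextFreeRule.Rewrites.input_output⟩).trans ?_
      have := hnull.append_left [Symbol.nonterminal Y]
      simpa using this
    · refine (Produces.single ⟨ρ, hρ, hin ▸ hZ ▸ ContextFreeRule.Rewrites.input_output⟩).trans ?_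
      have := Derives.append_right (v := [Symbol.nonterminal Z]) (w := []) hnull
        [Symbol.nonterminal Y]
      simpa using this

lemma UD.derives {A X : g.NT} (h : UD g A X) :
    g.Derives [Symbol.nonterminal A] [Symbol.nonterminal X] := by
  induction h with
  | refl => exact Derives.refl _
  | tail _ hstep ih => exact ih.trans (UnitStep.derives g hstep)

lemma duG_le {u v : List (Symbol T g.NT)} (h : (duG g).Derives u v) : g.Derives u v := by
  have := derives_flatMap (g₁ := duG g) (g₂ := g) (fun s => [s]) ?_ h
  · simpa [flatMap_single] using this
  · intro ρ hρ
    obtain ⟨A, _, ρ₀, hρ₀, hUD, _, rfl⟩ := (mem_duG g).1 hρ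
    show g.Derives [Symbol.nonterminal A] _
    rw [flatMap_single, List.map_id']
    exact (UD.derives g hUD).trans
      (Produces.single ⟨ρ₀, hρ₀, ContextFreeRule.Rewrites.input_output⟩)

lemma map_terminal_eq_nil {w : List T} {N : Type*}
    (h : (w.map (Symbol.terminal : T → Symbol T N)) = []) : w = [] := by
  cases w <;> simp_all

lemma duG_bwd (hg : ∀ ρ ∈ g.rules, GoodShape ρ) :
    ∀ n (X : g.NT) (w : List T),
      DerivesIn g [Symbol.nonterminal X] (w.map Symbol.terminal) n → w ≠ [] →
      ∀ A, A ∈ allNTs g → UD g A X →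
      (duG g).Derives [Symbol.nonterminal A] (w.map Symbol.terminal) := by
  intro n
  induction n using Nat.strong_induction_on with
  | _ n ih =>
  intro X w h hw A hA hUD
  rcases h.cases_head with ⟨rfl, heq⟩ | ⟨m, v, rfl, hp, hd⟩
  · cases w <;> simp_all
  · obtain ⟨ρ, hρ, hin, rfl⟩ := produces_singleton.1 hp
    rcases hg ρ hρ with h0 | ⟨B, hB⟩ | ⟨a, ha⟩ | ⟨B, C, hBC⟩
    · rw [h0] at hd
      exact absurd (map_terminal_eq_nil (hd.eq_of_terminals (by simp))) hw
    · rw [hB] at hd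
      refine ih m (by omega) B w hd hw A hA (hUD.tail ⟨ρ, hρ, hin, Or.inl hB⟩)
    · rw [ha] at hd
      have := hd.eq_of_terminals (by simp)
      have hwa : w = [a] := by
        cases w with
        | nil => simp at this
        | cons b w' => cases w' <;> simp_all
      subst hwa
      refine Produces.single ⟨⟨A, [Symbol.terminal a]⟩, ?_, ?_⟩
      · exact (mem_duG g).2 ⟨A, hA, ρ, hρ, hin ▸ hUD, Or.inl ⟨a, ha⟩, by rw [ha]⟩
      · simpa using ContextFreeRule.Rewrites.input_output
          (r := (⟨A, [Symbol.terminal a]⟩ : ContextFreeRule T (duG g).NT))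
    · rw [hBC] at hd
      have hd' : DerivesIn g ([Symbol.nonterminal B] ++ [Symbol.nonterminal C])
          (w.map Symbol.terminal) m := hd
      obtain ⟨v₁, v₂, n₁, n₂, hsplit, hn, hd1, hd2⟩ := hd'.append_split
      obtain ⟨w₁, w₂, rfl, hw₁, hw₂⟩ := List.map_eq_append_iff.1 hsplit
      subst hw₁; subst hw₂
      by_cases hw1 : w₁ = []
      · subst hw1
        have hnull : Nullable g B := hd1.derives
        have hstep : UnitStep g X C := ⟨ρ, hρ, hin, Or.inr ⟨B, Or.inr hBC, hnull⟩⟩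
        have : w₂ ≠ [] := by simpa using hw
        simpa using ih n₂ (by omega) C w₂ hd2 this A hA (hUD.tail hstep)
      · by_cases hw2 : w₂ = []
        · subst hw2
          have hnull : Nullable g C := hd2.derives
          have hstep : UnitStep g X B := ⟨ρ, hρ, hin, Or.inr ⟨C, Or.inl hBC, hnull⟩⟩
          simpa using ih n₁ (by omega) B w₁ hd1 hw1 A hA (hUD.tail hstep)
        · have hB' : B ∈ allNTs g := output_mem_allNTs g hρ (by rw [hBC]; simp)
          have hC' : C ∈ allNTs g := output_mem_allNTs g hρ (by rw [hBC]; simp)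
          have dB := ih n₁ (by omega) B w₁ hd1 hw1 B hB' Relation.ReflTransGen.refl
          have dC := ih n₂ (by omega) C w₂ hd2 hw2 C hC' Relation.ReflTransGen.refl
          have hrule : (duG g).Produces [Symbol.nonterminal A]
              [Symbol.nonterminal B, Symbol.nonterminal C] := by
            refine ⟨⟨A, [Symbol.nonterminal B, Symbol.nonterminal C]⟩, ?_, ?_⟩
            · exact (mem_duG g).2 ⟨A, hA, ρ, hρ, hin ▸ hUD, Or.inr ⟨B, C, hBC⟩, by rw [hBC]⟩
            · simpa using ContextFreeRule.Rewrites.input_output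
                (r := (⟨A, [Symbol.nonterminal B, Symbol.nonterminal C]⟩ :
                  ContextFreeRule T (duG g).NT))
          refine hrule.trans_derives ?_
          have step1 : (duG g).Derives
              ([Symbol.nonterminal B] ++ [Symbol.nonterminal C])
              (w₁.map Symbol.terminal ++ [Symbol.nonterminal C]) :=
            dB.append_right _
          have step2 : (duG g).Derives
              (w₁.map Symbol.terminal ++ [Symbol.nonterminal C])
              (w₁.map Symbol.terminal ++ w₂.map Symbol.terminal) :=
            dC.append_left _
          simpa using step1.trans step2

lemma duG_shape : ∀ ρ ∈ (duG g).rules, DUGood ρ := by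
  intro ρ hρ
  obtain ⟨A, _, ρ₀, _, _, hgood, rfl⟩ := (mem_duG g).1 hρ
  exact hgood

lemma duG_lang (hg : ∀ ρ ∈ g.rules, GoodShape ρ) (hε : [] ∉ g.language) :
    (duG g).language = g.language := by
  ext w
  rw [mem_language_iff, mem_language_iff]
  constructor
  · intro h
    exact duG_le g h
  · intro h
    have hw : w ≠ [] := by
      rintro rfl
      exact hε ((mem_language_iff g []).2 (by simpa using h))
    obtain ⟨n, hn⟩ := (derives_iff_derivesIn g _ _).1 h
    exact duG_bwd g hg n g.initial w hn hw g.initial (initial_mem_allNTs g)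
      Relation.ReflTransGen.refl

end DU

/-! ### Step 4: DYCK — occurrence construction -/

section DYCK

variable (g : ContextFreeGrammar T)

abbrev DSub := {ρ : ContextFreeRule T g.NT // ρ ∈ g.rules}

abbrev DNT := Option (DSub g × Bool × Option T × Option T)

def child (r : DSub g) (side : Bool) : Option g.NT :=
  match r.1.output with
  | [Symbol.nonterminal A, Symbol.nonterminal B] => some (if side then B else A)
  | _ => none

def headT {N : Type*} : List (Symbol T N) → Option T
  | [Symbol.terminal a] => some a
  | _ => none

lemma headT_eq_some {N : Type*} {l : List (Symbol T N)} {a : T} :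
    headT l = some a ↔ l = [Symbol.terminal a] := by
  constructor
  · intro h
    match l, h with
    | [Symbol.terminal b], h => simp [headT] at h; rw [h]
  · rintro rfl; rfl

noncomputable def validC : List (Option T) :=
  none :: g.rules.toList.filterMap (fun ρ => (headT ρ.output).map some)

lemma none_mem_validC : none ∈ validC g := by simp [validC]

lemma some_mem_validC {a : T} {ρ : ContextFreeRule T g.NT} (hρ : ρ ∈ g.rules)
    (h : ρ.output = [Symbol.terminal a]) : some a ∈ validC g := by
  simp only [validC, List.mem_cons, List.mem_filterMap]
  exact Or.inr ⟨ρ, by simpa using hρ, by rw [headT_eq_some.2 h]; rfl⟩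

noncomputable def occs : List (DNT g) :=
  none :: g.rules.attach.toList.flatMap (fun r =>
    [false, true].flatMap (fun s =>
      (validC g).flatMap (fun c1 =>
        (validC g).map (fun c2 => some (r, s, c1, c2)))))

lemma none_mem_occs : (none : DNT g) ∈ occs g := by simp [occs]

lemma some_mem_occs {r : DSub g} {s : Bool} {c1 c2 : Option T}
    (h1 : c1 ∈ validC g) (h2 : c2 ∈ validC g) : (some (r, s, c1, c2) : DNT g) ∈ occs g := by
  simp only [occs, List.mem_cons, List.mem_flatMap, List.mem_map]
  refine Or.inr ⟨r, by simp, s, by cases s <;> simp, c1, h1, c2, h2, rfl⟩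

/-- `o` is a binary-committed occurrence of `X`. -/
def OccB (o : DNT g) (X : g.NT) : Prop :=
  (o = none ∧ X = g.initial) ∨
  ∃ r side cL cR, o = some (r, side, cL, cR) ∧ child g r side = some X ∧
    (if side then cR else cL) = none

/-- `o` is an occurrence of `X` committed to the terminal `a`. -/
def OccT (o : DNT g) (X : g.NT) (a : T) : Prop :=
  (o = none ∧ X = g.initial) ∨
  ∃ r side cL cR, o = some (r, side, cL, cR) ∧ child g r side = some X ∧
    (if side then cR else cL) = some a

open Classical in
noncomputable def dyckBinRules : List (ContextFreeRule T (DNT g)) :=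
  (occs g).flatMap fun o =>
    g.rules.attach.toList.flatMap fun r' =>
      (validC g).flatMap fun c1 =>
        (validC g).filterMap fun c2 =>
          if (∃ A B, r'.1.output = [Symbol.nonterminal A, Symbol.nonterminal B]) ∧
              OccB g o r'.1.input
          then some ⟨o, [Symbol.nonterminal (some (r', false, c1, c2)),
                         Symbol.nonterminal (some (r', true, c1, c2))]⟩
          else none

open Classical in
noncomputable def dyckTermRules : List (ContextFreeRule T (DNT g)) :=
  (occs g).flatMap fun o =>
    g.rules.toList.filterMap fun r' =>
      (headT r'.output).bind fun a =>
        if OccT g o r'.input a then some ⟨o, [Symbol.terminal a]⟩ else none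

@[reducible] noncomputable def dyckG : ContextFreeGrammar T where
  NT := DNT g
  initial := none
  rules :=
    letI := Classical.decEq (ContextFreeRule T (DNT g))
    (dyckBinRules g ++ dyckTermRules g).toFinset

lemma mem_dyckG {ρ : ContextFreeRule T (DNT g)} :
    ρ ∈ (dyckG g).rules ↔
      (∃ (o : DNT g) (r' : DSub g) (c1 c2 : Option T),
        o ∈ occs g ∧ c1 ∈ validC g ∧ c2 ∈ validC g ∧
        (∃ A B, r'.1.output = [Symbol.nonterminal A, Symbol.nonterminal B]) ∧
        OccB g o r'.1.input ∧
        ρ = ⟨o, [Symbol.nonterminal (some (r', false, c1, c2)),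
                 Symbol.nonterminal (some (r', true, c1, c2))]⟩) ∨
      (∃ (o : DNT g) (r' : ContextFreeRule T g.NT) (a : T),
        o ∈ occs g ∧ r' ∈ g.rules ∧ r'.output = [Symbol.terminal a] ∧
        OccT g o r'.input a ∧ ρ = ⟨o, [Symbol.terminal a]⟩) := by
  classical
  show ρ ∈ (dyckBinRules g ++ dyckTermRules g).toFinset ↔ _
  rw [List.mem_toFinset, List.mem_append]
  unfold dyckBinRules dyckTermRules
  constructor
  · rintro (h | h)
    · left
      obtain ⟨o, ho, hmem⟩ := List.mem_flatMap.1 h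
      obtain ⟨r', _, hmem⟩ := List.mem_flatMap.1 hmem
      obtain ⟨c1, hc1, hmem⟩ := List.mem_flatMap.1 hmem
      obtain ⟨c2, hc2, hsome⟩ := List.mem_filterMap.1 hmem
      split_ifs at hsome with hc
      exact ⟨o, r', c1, c2, ho, hc1, hc2, hc.1, hc.2, (Option.some.inj hsome).symm⟩
    · right
      obtain ⟨o, ho, hmem⟩ := List.mem_flatMap.1 h
      obtain ⟨r', hr', hsome⟩ := List.mem_filterMap.1 hmem
      obtain ⟨a, ha, hif⟩ := Option.bind_eq_some_iff.1 hsome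
      split_ifs at hif with hc
      exact ⟨o, r', a, ho, by simpa using hr', headT_eq_some.1 ha, hc,
        (Option.some.inj hif).symm⟩
  · rintro (⟨o, r', c1, c2, ho, hc1, hc2, hAB, hoB, rfl⟩ | ⟨o, r', a, ho, hr', hout, hoT, rfl⟩)
    · left
      refine List.mem_flatMap.2 ⟨o, ho, List.mem_flatMap.2 ⟨r', by simp, ?_⟩⟩
      refine List.mem_flatMap.2 ⟨c1, hc1, List.mem_filterMap.2 ⟨c2, hc2, ?_⟩⟩
      rw [if_pos ⟨hAB, hoB⟩]
    · right
      refine List.mem_flatMap.2 ⟨o, ho, List.mem_filterMap.2 ⟨r', by simpa using hr', ?_⟩⟩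
      rw [headT_eq_some.2 hout]
      show (some a).bind _ = _
      rw [Option.bind_some, if_pos hoT]

def proj : DNT g → g.NT
  | none => g.initial
  | some (r, side, _, _) => (child g r side).getD g.initial

def projSym : Symbol T (DNT g) → List (Symbol T g.NT)
  | .terminal a => [.terminal a]
  | .nonterminal o => [.nonterminal (proj g o)]

lemma child_eq {r : DSub g} {A B : g.NT}
    (h : r.1.output = [Symbol.nonterminal A, Symbol.nonterminal B]) (side : Bool) :
    child g r side = some (if side then B else A) := by
  unfold child
  split
  · rename_i A' B' heq
    simp_all
  · rename_i hn
    exact (hn A B h).elim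

lemma child_false {r : DSub g} {A B : g.NT}
    (h : r.1.output = [Symbol.nonterminal A, Symbol.nonterminal B]) :
    child g r false = some A := by simpa using child_eq g h false

lemma child_true {r : DSub g} {A B : g.NT}
    (h : r.1.output = [Symbol.nonterminal A, Symbol.nonterminal B]) :
    child g r true = some B := by simpa using child_eq g h true

lemma proj_of_occB {o : DNT g} {X : g.NT} (h : OccB g o X) : proj g o = X := by
  rcases h with ⟨rfl, rfl⟩ | ⟨r, side, cL, cR, rfl, hchild, -⟩
  · rfl
  · simp [proj, hchild]

lemma proj_of_occT {o : DNT g} {X : g.NT} {a : T} (h : OccT g o X a) : proj g o = X := by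
  rcases h with ⟨rfl, rfl⟩ | ⟨r, side, cL, cR, rfl, hchild, -⟩
  · rfl
  · simp [proj, hchild]

lemma dyckG_le {u v : List (Symbol T (DNT g))}
    (h : (dyckG g).Derives u v) :
    g.Derives (u.flatMap (projSym g)) (v.flatMap (projSym g)) := by
  refine derives_flatMap (projSym g) ?_ h
  intro ρ hρ
  rcases (mem_dyckG g).1 hρ with
    ⟨o, r', c1, c2, ho, hc1, hc2, ⟨A, B, hAB⟩, hoB, rfl⟩ |
    ⟨o, r', a, ho, hr', hout, hoT, rfl⟩
  · show g.Derives (projSym g (Symbol.nonterminal o)) _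
    have : ([Symbol.nonterminal (some (r', false, c1, c2)),
        Symbol.nonterminal (some (r', true, c1, c2))] :
          List (Symbol T (DNT g))).flatMap (projSym g)
        = [Symbol.nonterminal A, Symbol.nonterminal B] := by
      simp [projSym, proj, child_false g hAB, child_true g hAB]
    rw [this]
    show g.Derives [Symbol.nonterminal (proj g o)] _
    rw [proj_of_occB g hoB, ← hAB]
    exact Produces.single ⟨r'.1, r'.2, ContextFreeRule.Rewrites.input_output⟩
  · show g.Derives (projSym g (Symbol.nonterminal o)) ([Symbol.terminal a].flatMap (projSym g))
    show g.Derives [Symbol.nonterminal (proj g o)] _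
    rw [proj_of_occT g hoT]
    have : ([Symbol.terminal a] : List (Symbol T (DNT g))).flatMap (projSym g)
        = [Symbol.terminal a] := rfl
    rw [this, ← hout]
    exact Produces.single ⟨r', hr', ContextFreeRule.Rewrites.input_output⟩

lemma dyckG_bwd (hg : ∀ ρ ∈ g.rules, DUGood ρ) :
    ∀ n (X : g.NT) (w : List T),
      DerivesIn g [Symbol.nonterminal X] (w.map Symbol.terminal) n →
      ((X = g.initial →
          (dyckG g).Derives [Symbol.nonterminal (none : DNT g)] (w.map Symbol.terminal)) ∧
        ∃ c, c ∈ validC g ∧ ∀ (r : DSub g) (side : Bool) (cL cR : Option T),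
          child g r side = some X → (if side then cR else cL) = c →
          (some (r, side, cL, cR) : DNT g) ∈ occs g →
          (dyckG g).Derives [Symbol.nonterminal (some (r, side, cL, cR) : DNT g)]
            (w.map Symbol.terminal)) := by
  intro n
  induction n using Nat.strong_induction_on with
  | _ n ih =>
  intro X w h
  rcases h.cases_head with ⟨rfl, heq⟩ | ⟨m, v, rfl, hp, hd⟩
  · exfalso
    cases w <;> simp_all
  · obtain ⟨ρ, hρ, hin, rfl⟩ := produces_singleton.1 hp
    rcases hg ρ hρ with ⟨a, ha⟩ | ⟨B, C, hBC⟩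
    · -- terminal rule
      rw [ha] at hd
      have := hd.eq_of_terminals (by simp)
      have hwa : w = [a] := by
        cases w with
        | nil => simp at this
        | cons b w' => cases w' <;> simp_all
      subst hwa
      constructor
      · intro hX
        refine Produces.single ⟨⟨none, [Symbol.terminal a]⟩, ?_, ?_⟩
        · refine (mem_dyckG g).2 (Or.inr ⟨none, ρ, a, none_mem_occs g, hρ, ha,
            Or.inl ⟨rfl, (hin.trans hX).symm ▸ rfl⟩, rfl⟩)
        · simpa using ContextFreeRule.Rewrites.input_output
            (r := (⟨none, [Symbol.terminal a]⟩ : ContextFreeRule T (DNT g)))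
      · refine ⟨some a, some_mem_validC g hρ ha, ?_⟩
        intro r side cL cR hchild hcommit hocc
        refine Produces.single ⟨⟨some (r, side, cL, cR), [Symbol.terminal a]⟩, ?_, ?_⟩
        · refine (mem_dyckG g).2 (Or.inr ⟨some (r, side, cL, cR), ρ, a,
            hocc, hρ, ha, Or.inr ⟨r, side, cL, cR, rfl, hin ▸ hchild, hcommit⟩, rfl⟩)
        · simpa using ContextFreeRule.Rewrites.input_output
            (r := (⟨some (r, side, cL, cR), [Symbol.terminal a]⟩ : ContextFreeRule T (DNT g)))
    · -- binary rule
      rw [hBC] at hd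
      have hd' : DerivesIn g ([Symbol.nonterminal B] ++ [Symbol.nonterminal C])
          (w.map Symbol.terminal) m := hd
      obtain ⟨v₁, v₂, n₁, n₂, hsplit, hn, hd1, hd2⟩ := hd'.append_split
      obtain ⟨w₁, w₂, rfl, hw₁, hw₂⟩ := List.map_eq_append_iff.1 hsplit
      subst hw₁; subst hw₂
      obtain ⟨-, c1, hc1, hB⟩ := ih n₁ (by omega) B w₁ hd1
      obtain ⟨-, c2, hc2, hC⟩ := ih n₂ (by omega) C w₂ hd2
      set rsub : DSub g := ⟨ρ, hρ⟩ with hrsub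
      have hchildF : child g rsub false = some B := child_false g hBC
      have hchildT : child g rsub true = some C := child_true g hBC
      have hL := hB rsub false c1 c2 hchildF rfl (some_mem_occs g hc1 hc2)
      have hR := hC rsub true c1 c2 hchildT rfl (some_mem_occs g hc1 hc2)
      have key : ∀ o : DNT g, o ∈ occs g → OccB g o X →
          (dyckG g).Derives [Symbol.nonterminal o]
            ((w₁ ++ w₂).map Symbol.terminal) := by
        intro o ho hoB
        have hrule : (dyckG g).Produces [Symbol.nonterminal o]
            [Symbol.nonterminal (some (rsub, false, c1, c2)),
             Symbol.nonterminal (some (rsub, true, c1, c2))] := by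
          refine ⟨_, (mem_dyckG g).2 (Or.inl ⟨o, rsub, c1, c2, ho, hc1, hc2,
            ⟨B, C, hBC⟩, hin ▸ hoB, rfl⟩), ContextFreeRule.Rewrites.input_output⟩
        refine hrule.trans_derives ?_
        have s1 := hL.append_right [Symbol.nonterminal (some (rsub, true, c1, c2))]
        have s2 := hR.append_left (w₁.map Symbol.terminal)
        have := s1.trans s2
        simpa using this
      constructor
      · intro hX
        exact key none (none_mem_occs g) (Or.inl ⟨rfl, hX⟩)
      · refine ⟨none, none_mem_validC g, ?_⟩
        intro r side cL cR hchild hcommit hocc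
        exact key (some (r, side, cL, cR)) hocc
          (Or.inr ⟨r, side, cL, cR, rfl, hchild, hcommit⟩)

lemma dyck_terms (w : List T) :
    (w.map (Symbol.terminal : T → Symbol T (DNT g))).flatMap (projSym g)
      = w.map Symbol.terminal := by
  induction w with
  | nil => rfl
  | cons a w ih => simp [projSym, ih]

lemma dyckG_lang (hg : ∀ ρ ∈ g.rules, DUGood ρ) :
    (dyckG g).language = g.language := by
  ext w
  rw [mem_language_iff, mem_language_iff]
  constructor
  · intro h
    have := dyckG_le g h
    rw [dyck_terms] at this
    simpa [projSym, proj] using this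
  · intro h
    obtain ⟨n, hn⟩ := (derives_iff_derivesIn g _ _).1 h
    exact (dyckG_bwd g hg n g.initial w hn).1 rfl

lemma dyckG_isDyckNF (hg : ∀ ρ ∈ g.rules, DUGood ρ) : IsDyckNF (dyckG g) := by
  refine ⟨?_, ?_, ?_, ?_⟩
  · -- Chomsky NF
    intro r hr
    rcases (mem_dyckG g).1 hr with ⟨o, r', c1, c2, -, -, -, -, -, rfl⟩ | ⟨o, r', a, -, -, -, -, rfl⟩
    · exact Or.inl ⟨_, _, rfl⟩
    · exact Or.inr ⟨a, rfl⟩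
  · -- terminal rules are alone
    intro r hr a hout hinit r' hr' hin
    rcases (mem_dyckG g).1 hr with ⟨o, rr, c1, c2, -, -, -, -, -, rfl⟩ |
      ⟨o, rr, b, -, -, -, hoT, rfl⟩
    · simp at hout
    · have hba : b = a := by simpa using hout
      subst hba
      -- o is not none
      obtain ⟨r₀, side₀, cL₀, cR₀, ho, hchild, hcommit⟩ : ∃ r₀ side₀ cL₀ cR₀,
          o = some (r₀, side₀, cL₀, cR₀) ∧ child g r₀ side₀ = some rr.input ∧
          (if side₀ then cR₀ else cL₀) = some b := by
        rcases hoT with ⟨h1, -⟩ | h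
        · exact absurd h1 (by simpa [dyckG] using hinit)
        · exact h
      rcases (mem_dyckG g).1 hr' with ⟨o', rr', c1', c2', -, -, -, -, hoB', rfl⟩ |
        ⟨o', rr', b', -, -, -, hoT', rfl⟩
      · -- binary rule with same input: impossible
        exfalso
        simp only at hin
        subst hin
        rcases hoB' with ⟨h1, -⟩ | ⟨r₁, side₁, cL₁, cR₁, heq, -, hcommit'⟩
        · rw [ho] at h1; simp at h1
        · rw [ho] at heq
          obtain ⟨rfl, rfl, rfl, rfl⟩ :
              r₀ = r₁ ∧ side₀ = side₁ ∧ cL₀ = cL₁ ∧ cR₀ = cR₁ := by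
            have := Option.some.inj heq
            simp_all
          rw [hcommit] at hcommit'
          simp at hcommit'
      · -- another terminal rule: same commitment forces same terminal
        simp only at hin
        subst hin
        rcases hoT' with ⟨h1, -⟩ | ⟨r₁, side₁, cL₁, cR₁, heq, -, hcommit'⟩
        · rw [ho] at h1; simp at h1
        · rw [ho] at heq
          obtain ⟨rfl, rfl, rfl, rfl⟩ :
              r₀ = r₁ ∧ side₀ = side₁ ∧ cL₀ = cL₁ ∧ cR₀ = cR₁ := by
            have := Option.some.inj heq
            simp_all
          rw [hcommit] at hcommit'
          have : b' = b := by simpa using hcommit'.symm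
          subst this
          rfl
  · -- no nonterminal both left and right
    intro r hr r' hr' A B B' hout hout'
    rcases (mem_dyckG g).1 hr with ⟨o, rr, c1, c2, -, -, -, -, -, rfl⟩ |
      ⟨o, rr, b, -, -, -, -, rfl⟩
    · rcases (mem_dyckG g).1 hr' with ⟨o', rr', c1', c2', -, -, -, -, -, rfl⟩ |
        ⟨o', rr', b', -, -, -, -, rfl⟩
      · exfalso
        simp only [List.cons.injEq, and_true] at hout hout'
        obtain ⟨hA, hB⟩ := hout
        obtain ⟨hB'', hA'⟩ := hout'
        have h1 := Symbol.nonterminal.inj hA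
        have h2 := Symbol.nonterminal.inj hA'
        rw [← h1] at h2
        simp at h2
      · simp at hout'
    · simp at hout
  · -- pairs determine each other
    intro r hr r' hr' A A' B B' hout hout'
    rcases (mem_dyckG g).1 hr with ⟨o, rr, c1, c2, -, -, -, -, -, rfl⟩ |
      ⟨o, rr, b, -, -, -, -, rfl⟩
    · rcases (mem_dyckG g).1 hr' with ⟨o', rr', c1', c2', -, -, -, -, -, rfl⟩ |
        ⟨o', rr', b', -, -, -, -, rfl⟩
      · simp only [List.cons.injEq, and_true] at hout hout'
        obtain ⟨hA, hB⟩ := hout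
        obtain ⟨hA', hB'⟩ := hout'
        have hA := Symbol.nonterminal.inj hA
        have hB := Symbol.nonterminal.inj hB
        have hA' := Symbol.nonterminal.inj hA'
        have hB' := Symbol.nonterminal.inj hB'
        subst hA; subst hB; subst hA'; subst hB'
        constructor
        · intro hBB'
          injection hBB' with h
          injection h with h1 h2
          injection h2 with h3 h4
          injection h4 with h5 h6
          subst h1; subst h5; subst h6
          rfl
        · intro hAA'
          injection hAA' with h
          injection h with h1 h2
          injection h2 with h3 h4
          injection h4 with h5 h6
          subst h1; subst h5; subst h6
          rfl
      · simp at hout'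
    · simp at hout

end DYCK

/-! ### Step 5: relabeling along an injection -/

section RELABEL

variable (g : ContextFreeGrammar T) {N₂ : Type} (f : g.NT → N₂)

def relabelSym {N₁ N₂ : Type*} (f : N₁ → N₂) : Symbol T N₁ → Symbol T N₂
  | .terminal a => .terminal a
  | .nonterminal X => .nonterminal (f X)

@[reducible] noncomputable def relabelG : ContextFreeGrammar T where
  NT := N₂
  initial := f g.initial
  rules :=
    letI := Classical.decEq (ContextFreeRule T N₂)
    (g.rules.toList.map (fun ρ =>
      (⟨f ρ.input, ρ.output.map (relabelSym f)⟩ : ContextFreeRule T N₂))).toFinset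

lemma mem_relabelG {ρ₂ : ContextFreeRule T N₂} :
    ρ₂ ∈ (relabelG g f).rules ↔
      ∃ ρ ∈ g.rules, ρ₂ = ⟨f ρ.input, ρ.output.map (relabelSym f)⟩ := by
  classical
  show ρ₂ ∈ (letI := Classical.decEq (ContextFreeRule T N₂);
    (_ : List (ContextFreeRule T N₂)).toFinset) ↔ _
  rw [@List.mem_toFinset _ (Classical.decEq _), List.mem_map]
  constructor
  · rintro ⟨ρ, hρ, rfl⟩
    exact ⟨ρ, by simpa using hρ, rfl⟩
  · rintro ⟨ρ, hρ, rfl⟩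
    exact ⟨ρ, by simpa using hρ, rfl⟩

noncomputable def backSym (hf : Function.Injective f) : Symbol T N₂ → List (Symbol T g.NT)
  | .terminal a => [.terminal a]
  | .nonterminal Y =>
      [.nonterminal (@Function.invFun _ _ ⟨g.initial⟩ f Y)]

lemma back_relabel (hf : Function.Injective f) (l : List (Symbol T g.NT)) :
    (l.map (relabelSym f)).flatMap (backSym g f hf) = l := by
  induction l with
  | nil => rfl
  | cons s l ih =>
    cases s with
    | terminal a => simp [relabelSym, backSym, ih]
    | nonterminal X =>
      simp only [List.map_cons, List.flatMap_cons, relabelSym, backSym, ih]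
      have : @Function.invFun _ _ ⟨g.initial⟩ f (f X) = X :=
        @Function.leftInverse_invFun _ _ ⟨g.initial⟩ f hf X
      rw [this]
      rfl

lemma relabelG_le (hf : Function.Injective f) {u v : List (Symbol T N₂)}
    (h : (relabelG g f).Derives u v) :
    g.Derives (u.flatMap (backSym g f hf)) (v.flatMap (backSym g f hf)) := by
  refine derives_flatMap (backSym g f hf) ?_ h
  intro ρ hρ
  obtain ⟨ρ₀, hρ₀, rfl⟩ := (mem_relabelG g f).1 hρ
  show g.Derives (backSym g f hf (Symbol.nonterminal (f ρ₀.input))) _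
  rw [back_relabel g f hf]
  show g.Derives [Symbol.nonterminal (@Function.invFun _ _ ⟨g.initial⟩ f (f ρ₀.input))] _
  rw [@Function.leftInverse_invFun _ _ ⟨g.initial⟩ f hf ρ₀.input]
  exact Produces.single ⟨ρ₀, hρ₀, ContextFreeRule.Rewrites.input_output⟩

lemma relabelG_ge {u v : List (Symbol T g.NT)} (h : g.Derives u v) :
    (relabelG g f).Derives (u.map (relabelSym f)) (v.map (relabelSym f)) := by
  have := derives_flatMap (g₁ := g) (g₂ := relabelG g f) (fun s => [relabelSym f s]) ?_ h
  · simpa [flatMap_single] using this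
  · intro ρ hρ
    show (relabelG g f).Derives [relabelSym f (Symbol.nonterminal ρ.input)] _
    rw [flatMap_single]
    show (relabelG g f).Derives [Symbol.nonterminal (f ρ.input)] _
    exact Produces.single ⟨⟨f ρ.input, ρ.output.map (relabelSym f)⟩,
      (mem_relabelG g f).2 ⟨ρ, hρ, rfl⟩, ContextFreeRule.Rewrites.input_output⟩

lemma back_terms (hf : Function.Injective f) (w : List T) :
    (w.map (Symbol.terminal : T → Symbol T N₂)).flatMap (backSym g f hf)
      = w.map Symbol.terminal := by
  induction w with
  | nil => rfl
  | cons a w ih => simp [backSym, ih]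

lemma relabel_terms (w : List T) :
    (w.map (Symbol.terminal : T → Symbol T g.NT)).map (relabelSym f)
      = w.map Symbol.terminal := by
  induction w with
  | nil => rfl
  | cons a w ih => simp [relabelSym, ih]

lemma relabelG_lang (hf : Function.Injective f) :
    (relabelG g f).language = g.language := by
  ext w
  rw [mem_language_iff, mem_language_iff]
  constructor
  · intro h
    have := relabelG_le g f hf h
    rw [back_terms] at this
    have hini : ([Symbol.nonterminal (relabelG g f).initial] :
        List (Symbol T N₂)).flatMap (backSym g f hf) = [Symbol.nonterminal g.initial] := by
      show [Symbol.nonterminal (@Function.invFun _ _ ⟨g.initial⟩ f (f g.initial))] = _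
      rw [@Function.leftInverse_invFun _ _ ⟨g.initial⟩ f hf g.initial]
    rw [hini] at this
    exact this
  · intro h
    have := relabelG_ge g f h
    rw [relabel_terms] at this
    exact this

lemma relabel_out_term {l : List (Symbol T g.NT)} {a : T}
    (h : l.map (relabelSym f) = [Symbol.terminal a]) : l = [Symbol.terminal a] := by
  cases l with
  | nil => simp at h
  | cons s t =>
    cases t with
    | cons u v => simp at h
    | nil =>
      cases s with
      | terminal b => simp_all [relabelSym]
      | nonterminal X => simp [relabelSym] at h

lemma relabel_out_bin {l : List (Symbol T g.NT)} {P Q : N₂}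
    (h : l.map (relabelSym f) = [Symbol.nonterminal P, Symbol.nonterminal Q]) :
    ∃ A B, l = [Symbol.nonterminal A, Symbol.nonterminal B] ∧ P = f A ∧ Q = f B := by
  cases l with
  | nil => simp at h
  | cons s t =>
    cases t with
    | nil => simp at h
    | cons u v =>
      cases v with
      | cons x y => simp at h
      | nil =>
        cases s with
        | terminal b => simp [relabelSym] at h
        | nonterminal A =>
          cases u with
          | terminal b => simp [relabelSym] at h
          | nonterminal B =>
            simp only [List.map_cons, List.map_nil, relabelSym, List.cons.injEq,
              and_true] at h
            exact ⟨A, B, rfl, (Symbol.nonterminal.inj h.1).symm,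
              (Symbol.nonterminal.inj h.2).symm⟩

lemma relabelG_isDyckNF (hf : Function.Injective f) (hd : IsDyckNF g) :
    IsDyckNF (relabelG g f) := by
  obtain ⟨hcnf, h2, h3, h4⟩ := hd
  refine ⟨?_, ?_, ?_, ?_⟩
  · intro r hr
    obtain ⟨ρ, hρ, rfl⟩ := (mem_relabelG g f).1 hr
    rcases hcnf ρ hρ with ⟨A, B, hAB⟩ | ⟨a, ha⟩
    · exact Or.inl ⟨f A, f B, by rw [hAB]; rfl⟩
    · exact Or.inr ⟨a, by rw [ha]; rfl⟩
  · intro r hr a hout hinit r' hr' hin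
    obtain ⟨ρ, hρ, rfl⟩ := (mem_relabelG g f).1 hr
    obtain ⟨ρ', hρ', rfl⟩ := (mem_relabelG g f).1 hr'
    have hout₀ : ρ.output = [Symbol.terminal a] := relabel_out_term g f hout
    have hinit₀ : ρ.input ≠ g.initial := by
      intro hc
      exact hinit (by show f ρ.input = f g.initial; rw [hc])
    have hin₀ : ρ'.input = ρ.input := hf (by simpa using hin)
    rw [h2 ρ hρ a hout₀ hinit₀ ρ' hρ' hin₀]
  · intro r hr r' hr' A B B' hout hout'
    obtain ⟨ρ, hρ, rfl⟩ := (mem_relabelG g f).1 hr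
    obtain ⟨ρ', hρ', rfl⟩ := (mem_relabelG g f).1 hr'
    obtain ⟨A₀, B₀, hl, hPA, hQB⟩ := relabel_out_bin g f hout
    obtain ⟨B₀', A₀', hl', hPA', hQB'⟩ := relabel_out_bin g f hout'
    have heq : A₀' = A₀ := hf (by rw [← hPA, ← hQB'])
    have hswap : ρ'.output = [Symbol.nonterminal B₀', Symbol.nonterminal A₀] := by
      rw [hl', heq]
    rw [h3 ρ hρ ρ' hρ' A₀ B₀ B₀' hl hswap]
  · intro r hr r' hr' A A' B B' hout hout'
    obtain ⟨ρ, hρ, rfl⟩ := (mem_relabelG g f).1 hr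
    obtain ⟨ρ', hρ', rfl⟩ := (mem_relabelG g f).1 hr'
    obtain ⟨A₀, B₀, hl, hPA, hQB⟩ := relabel_out_bin g f hout
    obtain ⟨A₀', B₀', hl', hPA', hQB'⟩ := relabel_out_bin g f hout'
    obtain ⟨key1, key2⟩ := h4 ρ hρ ρ' hρ' A₀ A₀' B₀ B₀' hl hl'
    constructor
    · intro hBB'
      have : B₀ = B₀' := hf (by rw [← hQB, ← hQB', hBB'])
      rw [hPA, hPA', key1 this]
    · intro hAA'
      have : A₀ = A₀' := hf (by rw [← hPA, ← hPA', hAA'])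
      rw [hQB, hQB', key2 this]

end RELABEL

end DyckNF


/-- For every context-free grammar `G` whose language does not contain the
empty word, there exists a context-free grammar `G'` in Dyck normal form generating the same
language. -/
theorem exists_dyckNF {T : Type} (G : ContextFreeGrammar T)
    (hG : [] ∉ G.language) :
    ∃ G' : ContextFreeGrammar T, IsDyckNF G' ∧ G'.language = G.language := by
  classical
  have h1 : (DyckNF.termG G).language = G.language := DyckNF.termG_lang G
  have h2 : (DyckNF.binG (DyckNF.termG G)).language = G.language :=
    (DyckNF.binG_lang (DyckNF.termG G)).trans h1
  have hshape2 := DyckNF.binG_shape (DyckNF.termG G) (DyckNF.termG_shape G)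
  have hε2 : [] ∉ (DyckNF.binG (DyckNF.termG G)).language := by rw [h2]; exact hG
  set G3 := DyckNF.duG (DyckNF.binG (DyckNF.termG G)) with hG3
  have h3 : G3.language = G.language :=
    (DyckNF.duG_lang (DyckNF.binG (DyckNF.termG G)) hshape2 hε2).trans h2
  have hshape3 := DyckNF.duG_shape (DyckNF.binG (DyckNF.termG G))
  set G4 := DyckNF.dyckG G3 with hG4
  have h4 : G4.language = G.language := (DyckNF.dyckG_lang G3 hshape3).trans h3
  have hDyck4 : IsDyckNF G4 := DyckNF.dyckG_isDyckNF G3 hshape3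
  -- relabel into a small type, lifted to the target universe
  haveI : Fintype (DyckNF.DSub G3) := FinsetCoe.fintype _
  let j : DyckNF.DSub G3 → ℕ := fun x => (Fintype.equivFin _ x : ℕ)
  have hj : Function.Injective j :=
    Fin.val_injective.comp (Equiv.injective _)
  let f : DyckNF.DNT G3 → ULift.{_} (Option (ℕ × Bool × Option T × Option T)) :=
    fun o => ULift.up (o.map (fun p => (j p.1, p.2)))
  have hf : Function.Injective f := by
    intro a b hab
    have hab' := congrArg ULift.down hab
    refine Option.map_injective ?_ hab'
    intro p q hpq
    have hpq' : (j p.1, p.2) = (j q.1, q.2) := hpq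
    injection hpq' with e1 e2
    exact Prod.ext (hj e1) e2
  refine ⟨DyckNF.relabelG G4 f, ?_, ?_⟩
  · exact DyckNF.relabelG_isDyckNF G4 f hf hDyck4
  · exact (DyckNF.relabelG_lang G4 f hf).trans h4
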